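/- arXiv:1702.06152 — 6 statements merged into one kernel-verified Lean document; each statement's English description precedes it below -/
import Mathlib

section
/- Let c > 0 and u > 0. For every a ∈ (0, u), (a/u)·log₂(1 + c/a) + ((u−a)/u)·log₂(1 + c/(u−a)) ≤ log₂(1 + 2c/u), with equality if and only if a = u/2. -/
/-- One-step bisection inequality: for `c > 0`, `u > 0` and every `a ∈ (0, u)`,
`(a/u)·log₂(1 + c/a) + ((u−a)/u)·log₂(1 + c/(u−a)) ≤ log₂(1 + 2c/u)`,
with equality if and only if `a = u/2`. -/
theorem one_step_bisection_optimal (c u : ℝ) (hc : 0 < c) (hu : 0 < u) :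
    ∀ a ∈ Set.Ioo (0 : ℝ) u,
      (a / u) * Real.logb 2 (1 + c / a) +
        ((u - a) / u) * Real.logb 2 (1 + c / (u - a)) ≤ Real.logb 2 (1 + 2 * c / u) ∧
      ((a / u) * Real.logb 2 (1 + c / a) +
        ((u - a) / u) * Real.logb 2 (1 + c / (u - a)) = Real.logb 2 (1 + 2 * c / u)
        ↔ a = u / 2) := by
  intro a ha
  obtain ⟨ha0, hau⟩ := ha
  have hua : 0 < u - a := by linarith
  have hApos : (0:ℝ) < 1 + c / a := by positivity
  have hBpos : (0:ℝ) < 1 + c / (u - a) := by positivity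
  have hAmem : (1 + c / a) ∈ Set.Ioi (0:ℝ) := hApos
  have hBmem : (1 + c / (u - a)) ∈ Set.Ioi (0:ℝ) := hBpos
  have ht : 0 < a / u := by positivity
  have hs : 0 < (u - a) / u := by positivity
  have hts : a / u + (u - a) / u = 1 := by field_simp; ring
  have hcomb : (a / u) • (1 + c / a) + ((u - a) / u) • (1 + c / (u - a)) = 1 + 2 * c / u := by
    simp only [smul_eq_mul]
    field_simp
    ring
  have hlog2 : (0:ℝ) < Real.log 2 := Real.log_pos (by norm_num)
  -- Jensen inequality for log
  have key : (a / u) * Real.log (1 + c / a) + ((u - a) / u) * Real.log (1 + c / (u - a))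
      ≤ Real.log (1 + 2 * c / u) := by
    have h := strictConcaveOn_log_Ioi.concaveOn.2 hAmem hBmem ht.le hs.le hts
    simp only [smul_eq_mul] at h hcomb
    rwa [hcomb] at h
  have keylogb : (a / u) * Real.logb 2 (1 + c / a) +
      ((u - a) / u) * Real.logb 2 (1 + c / (u - a)) ≤ Real.logb 2 (1 + 2 * c / u) := by
    simp only [Real.logb]
    calc (a / u) * (Real.log (1 + c / a) / Real.log 2)
          + (u - a) / u * (Real.log (1 + c / (u - a)) / Real.log 2)
        = ((a / u) * Real.log (1 + c / a)
            + (u - a) / u * Real.log (1 + c / (u - a))) / Real.log 2 := by ring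
      _ ≤ Real.log (1 + 2 * c / u) / Real.log 2 :=
          div_le_div_of_nonneg_right key hlog2.le
  refine ⟨keylogb, ?_, ?_⟩
  · intro heq
    by_contra hne
    have hABne : (1 + c / a) ≠ (1 + c / (u - a)) := by
      intro h
      have h' : c / a = c / (u - a) := by linarith
      have : a = u - a := by
        field_simp at h'
        linarith
      exact hne (by linarith)
    have strict := strictConcaveOn_log_Ioi.2 hAmem hBmem hABne ht hs hts
    rw [hcomb] at strict
    simp only [smul_eq_mul] at strict
    have keyb : (a / u) * Real.logb 2 (1 + c / a) +
        ((u - a) / u) * Real.logb 2 (1 + c / (u - a)) < Real.logb 2 (1 + 2 * c / u) := by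
      simp only [Real.logb]
      calc (a / u) * (Real.log (1 + c / a) / Real.log 2)
            + (u - a) / u * (Real.log (1 + c / (u - a)) / Real.log 2)
          = ((a / u) * Real.log (1 + c / a)
              + (u - a) / u * Real.log (1 + c / (u - a))) / Real.log 2 := by ring
        _ < Real.log (1 + 2 * c / u) / Real.log 2 :=
            div_lt_div_of_pos_right strict hlog2
    exact absurd heq keyb.ne
  · intro heq
    subst heq
    have h1 : u - u / 2 = u / 2 := by ring
    have h2 : c / (u / 2) = 2 * c / u := by
      rw [div_div_eq_mul_div]; ring_nf
    rw [h1, h2]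
    have h3 : u / 2 / u = 1 / 2 := by field_simp
    rw [h3]
    ring
end

section
/- Fix γ > 0. Define a sequence of functions W_k : (0, ∞) → ℝ recursively by W_0(u) = log₂(1 + γ/u) and W_{k+1}(u) = sup over a ∈ (0, u) of [ (a/u)·W_k(a) + ((u−a)/u)·W_k(u−a) ]. Then for every k ∈ ℕ and every u > 0, W_k(u) = log₂(1 + 2^k · γ / u). -/
/-- Jensen step: for `a ∈ (0,u)`, the two-point average of `logb 2 (1 + c/·)`
is at most `logb 2 (1 + 2c/u)`. -/
lemma jensen_step (c u a : ℝ) (hc : 0 < c) (ha : 0 < a) (hau : a < u) :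
    (a / u) * Real.logb 2 (1 + c / a) + ((u - a) / u) * Real.logb 2 (1 + c / (u - a))
      ≤ Real.logb 2 (1 + 2 * c / u) := by
  have hu : 0 < u := ha.trans hau
  have hb : 0 < u - a := sub_pos.mpr hau
  have hx : (1 + c / a) ∈ Set.Ioi (0 : ℝ) := by
    simp only [Set.mem_Ioi]; positivity
  have hy : (1 + c / (u - a)) ∈ Set.Ioi (0 : ℝ) := by
    simp only [Set.mem_Ioi]; positivity
  have h := strictConcaveOn_log_Ioi.concaveOn.2 hx hy
    (by positivity : (0:ℝ) ≤ a / u) (by positivity : (0:ℝ) ≤ (u - a) / u)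
    (by field_simp; ring)
  rw [smul_eq_mul, smul_eq_mul, smul_eq_mul, smul_eq_mul] at h
  have heq : a / u * (1 + c / a) + (u - a) / u * (1 + c / (u - a)) = 1 + 2 * c / u := by
    field_simp; ring
  rw [heq] at h
  have h2 : (0 : ℝ) < Real.log 2 := Real.log_pos (by norm_num)
  rw [Real.logb, Real.logb, Real.logb]
  calc a / u * (Real.log (1 + c / a) / Real.log 2)
        + (u - a) / u * (Real.log (1 + c / (u - a)) / Real.log 2)
      = (a / u * Real.log (1 + c / a)
        + (u - a) / u * Real.log (1 + c / (u - a))) / Real.log 2 := by ring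
    _ ≤ Real.log (1 + 2 * c / u) / Real.log 2 := by gcongr

/-- Scalar dynamic program of Theorem 1: with `W_0(u) = log₂(1 + γ/u)` and
`W_{k+1}(u) = sup_{a ∈ (0,u)} [(a/u)·W_k(a) + ((u−a)/u)·W_k(u−a)]`, one has
`W_k(u) = log₂(1 + 2^k γ / u)` for all `k ∈ ℕ` and `u > 0`. -/
theorem value_function_closed_form (γ : ℝ) (hγ : 0 < γ) (W : ℕ → ℝ → ℝ)
    (h0 : ∀ u : ℝ, 0 < u → W 0 u = Real.logb 2 (1 + γ / u))
    (hrec : ∀ k : ℕ, ∀ u : ℝ, 0 < u →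
      W (k + 1) u =
        sSup ((fun a : ℝ => (a / u) * W k a + ((u - a) / u) * W k (u - a)) ''
          Set.Ioo 0 u)) :
    ∀ k : ℕ, ∀ u : ℝ, 0 < u → W k u = Real.logb 2 (1 + 2 ^ k * γ / u) := by
  intro k
  induction k with
  | zero =>
    intro u hu
    rw [h0 u hu]; norm_num
  | succ k ih =>
    intro u hu
    set c : ℝ := 2 ^ k * γ with hcdef
    have hc : 0 < c := by positivity
    have hval : ∀ a ∈ Set.Ioo (0:ℝ) u,
        (a / u) * W k a + ((u - a) / u) * W k (u - a)
          = (a / u) * Real.logb 2 (1 + c / a)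
            + ((u - a) / u) * Real.logb 2 (1 + c / (u - a)) := by
      rintro a ⟨ha, hau⟩
      rw [ih a ha, ih (u - a) (sub_pos.mpr hau)]
    have hbound : ∀ x ∈ ((fun a : ℝ => (a / u) * W k a + ((u - a) / u) * W k (u - a)) ''
        Set.Ioo 0 u), x ≤ Real.logb 2 (1 + 2 * c / u) := by
      rintro x ⟨a, ha, rfl⟩
      simp only []
      rw [hval a ha]
      exact jensen_step c u a hc ha.1 ha.2
    have htarget : Real.logb 2 (1 + 2 ^ (k + 1) * γ / u) = Real.logb 2 (1 + 2 * c / u) := by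
      rw [hcdef]; ring_nf
    rw [hrec k u hu, htarget]
    apply le_antisymm
    · exact csSup_le ⟨_, ⟨u / 2, ⟨by positivity, by linarith⟩, rfl⟩⟩ hbound
    · apply le_csSup ⟨_, hbound⟩
      refine ⟨u / 2, ⟨by positivity, by linarith⟩, ?_⟩
      simp only []
      rw [hval (u / 2) ⟨by positivity, by linarith⟩]
      have h1 : u - u / 2 = u / 2 := by ring
      have h2 : c / (u / 2) = 2 * c / u := by
        field_simp
      rw [h1, h2]
      field_simp
      ring
end

section
/- Fix γ > 0, k ∈ ℕ, and u > 0, and suppose W_k(w) = log₂(1 + 2^k·γ/w) for all w > 0. Then the function a ↦ (a/u)·W_k(a) + ((u−a)/u)·W_k(u−a) on (0, u) attains its maximum at a = u/2 and at no other point; i.e., the unique optimal sensing beam bisects the uncertainty region. -/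
lemma bisection_key (c : ℝ) (hc : 0 < c) (a b : ℝ) (ha : 0 < a) (hb : 0 < b)
    (hab : a ≠ b) :
    a * Real.log (1 + c / a) + b * Real.log (1 + c / b)
      < (a + b) * Real.log (1 + c / ((a + b) / 2)) := by
  have hs : 0 < a + b := by linarith
  have hx : (1 : ℝ) + c / a ∈ Set.Ioi (0:ℝ) := by
    have : 0 < c / a := div_pos hc ha
    simp only [Set.mem_Ioi]; linarith
  have hy : (1 : ℝ) + c / b ∈ Set.Ioi (0:ℝ) := by
    have : 0 < c / b := div_pos hc hb
    simp only [Set.mem_Ioi]; linarith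
  have hxy : (1 : ℝ) + c / a ≠ 1 + c / b := by
    intro h
    apply hab
    have h' : c / a = c / b := by linarith
    field_simp at h'
    rcases h' with h' | h'
    · linarith
  have hw1 : 0 < a / (a + b) := div_pos ha hs
  have hw2 : 0 < b / (a + b) := div_pos hb hs
  have hsum : a / (a + b) + b / (a + b) = 1 := by
    rw [← add_div, div_self hs.ne']
  have hcon := strictConcaveOn_log_Ioi.2 hx hy hxy hw1 hw2 hsum
  simp only [smul_eq_mul] at hcon
  have harg : a / (a + b) * (1 + c / a) + b / (a + b) * (1 + c / b)
      = 1 + c / ((a + b) / 2) := by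
    field_simp
    ring
  rw [harg] at hcon
  have h2 : a * Real.log (1 + c / a) + b * Real.log (1 + c / b)
      = (a + b) * (a / (a + b) * Real.log (1 + c / a)
          + b / (a + b) * Real.log (1 + c / b)) := by
    field_simp
  rw [h2]
  exact (mul_lt_mul_iff_right₀ hs).2 hcon

/-- Optimality and uniqueness of the bisection policy: if
`W(w) = log₂(1 + 2^k γ / w)` for all `w > 0`, then
`a ↦ (a/u)·W(a) + ((u−a)/u)·W(u−a)` on `(0, u)` attains its maximum at `a = u/2`
and at no other point. -/
theorem bisection_unique_maximizer (γ : ℝ) (hγ : 0 < γ) (k : ℕ) (u : ℝ) (hu : 0 < u)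
    (W : ℝ → ℝ) (hW : ∀ w : ℝ, 0 < w → W w = Real.logb 2 (1 + 2 ^ k * γ / w)) :
    (∀ a ∈ Set.Ioo (0 : ℝ) u,
      (a / u) * W a + ((u - a) / u) * W (u - a) ≤
        ((u / 2) / u) * W (u / 2) + ((u - u / 2) / u) * W (u - u / 2)) ∧
    ∀ a ∈ Set.Ioo (0 : ℝ) u,
      (a / u) * W a + ((u - a) / u) * W (u - a) =
        ((u / 2) / u) * W (u / 2) + ((u - u / 2) / u) * W (u - u / 2) → a = u / 2 := by
  set c : ℝ := 2 ^ k * γ with hc_def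
  have hc : 0 < c := mul_pos (by positivity) hγ
  have hl2 : 0 < Real.log 2 := Real.log_pos (by norm_num)
  -- the key strict inequality for a ≠ u/2
  have key : ∀ a ∈ Set.Ioo (0 : ℝ) u, a ≠ u / 2 →
      (a / u) * W a + ((u - a) / u) * W (u - a) <
        ((u / 2) / u) * W (u / 2) + ((u - u / 2) / u) * W (u - u / 2) := by
    intro a ⟨ha0, hau⟩ hne
    have hb0 : 0 < u - a := by linarith
    have hhalf : 0 < u / 2 := by linarith
    have hab : a ≠ u - a := by intro h; apply hne; linarith
    have hk := bisection_key c hc a (u - a) ha0 hb0 hab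
    have hsum : a + (u - a) = u := by ring
    rw [hsum] at hk
    rw [hW a ha0, hW (u - a) hb0, hW (u / 2) hhalf,
      show u - u / 2 = u / 2 by ring, hW (u / 2) hhalf]
    simp only [Real.logb]
    have e1 : a / u * (Real.log (1 + c / a) / Real.log 2)
        + (u - a) / u * (Real.log (1 + c / (u - a)) / Real.log 2)
        = (a * Real.log (1 + c / a) + (u - a) * Real.log (1 + c / (u - a)))
            / (u * Real.log 2) := by
      field_simp
    have e2 : u / 2 / u * (Real.log (1 + c / (u / 2)) / Real.log 2)
        + u / 2 / u * (Real.log (1 + c / (u / 2)) / Real.log 2)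
        = (u * Real.log (1 + c / (u / 2))) / (u * Real.log 2) := by
      field_simp
      ring
    rw [e1, e2]
    have hpos : 0 < u * Real.log 2 := mul_pos hu hl2
    gcongr
  constructor
  · intro a ha
    by_cases hne : a = u / 2
    · subst hne
      exact le_of_eq (by ring_nf)
    · exact (key a ha hne).le
  · intro a ha heq
    by_contra hne
    exact absurd heq (ne_of_lt (key a ha hne))
end

section
/- Let N > 0 and ζ > 0 be real constants. The function V(L) = ((N − L)/N) · log₂(1 + 2^L · N · ζ / (N − L)), defined for L ∈ [0, N), is strictly log-concave on [0, N); i.e., L ↦ ln V(L) is strictly concave on [0, N). -/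
open Real Set

noncomputable def chiAux (t : ℝ) : ℝ := Real.log (Real.log (1 + Real.exp t)) - t

noncomputable def d1Aux (t : ℝ) : ℝ :=
  Real.exp t / ((1 + Real.exp t) * Real.log (1 + Real.exp t)) - 1

noncomputable def d2Aux (t : ℝ) : ℝ :=
  Real.exp t * (Real.log (1 + Real.exp t) - Real.exp t) /
    ((1 + Real.exp t) * Real.log (1 + Real.exp t)) ^ 2

lemma onePlusExp_pos (t : ℝ) : (0:ℝ) < 1 + Real.exp t := by positivity

lemma logOnePlusExp_pos (t : ℝ) : (0:ℝ) < Real.log (1 + Real.exp t) :=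
  Real.log_pos (by linarith [Real.exp_pos t])

lemma hasDerivAt_logA (t : ℝ) :
    HasDerivAt (fun t => Real.log (1 + Real.exp t)) (Real.exp t / (1 + Real.exp t)) t :=
  ((Real.hasDerivAt_exp t).const_add 1).log (onePlusExp_pos t).ne'

lemma hasDerivAt_chiAux (t : ℝ) : HasDerivAt chiAux (d1Aux t) t := by
  have h := ((hasDerivAt_logA t).log (logOnePlusExp_pos t).ne').sub (hasDerivAt_id t)
  refine (h : HasDerivAt chiAux _ t).congr_deriv ?_
  unfold d1Aux
  rw [div_div]

lemma hasDerivAt_d1Aux (t : ℝ) : HasDerivAt d1Aux (d2Aux t) t := by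
  have hD : HasDerivAt (fun t => (1 + Real.exp t) * Real.log (1 + Real.exp t))
      (Real.exp t * Real.log (1 + Real.exp t)
        + (1 + Real.exp t) * (Real.exp t / (1 + Real.exp t))) t :=
    ((Real.hasDerivAt_exp t).const_add 1).mul (hasDerivAt_logA t)
  have hq := ((Real.hasDerivAt_exp t).div hD
    (mul_pos (onePlusExp_pos t) (logOnePlusExp_pos t)).ne').sub_const 1
  have : d1Aux = fun t => Real.exp t / ((1 + Real.exp t) * Real.log (1 + Real.exp t)) - 1 := rfl
  rw [this]
  refine hq.congr_deriv ?_
  unfold d2Aux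
  have h1 := (onePlusExp_pos t).ne'
  field_simp
  ring

lemma logA_lt_exp (t : ℝ) : Real.log (1 + Real.exp t) < Real.exp t := by
  have := Real.log_lt_sub_one_of_pos (onePlusExp_pos t)
    (by have := Real.exp_pos t; intro h; linarith)
  linarith

lemma exp_lt_mul (t : ℝ) : Real.exp t < (1 + Real.exp t) * Real.log (1 + Real.exp t) := by
  have he := Real.exp_pos t
  have hE := onePlusExp_pos t
  have hx : (0:ℝ) < (1 + Real.exp t)⁻¹ := by positivity
  have hne : (1 + Real.exp t)⁻¹ ≠ 1 := by
    intro h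
    rw [inv_eq_one] at h
    linarith
  have := Real.log_lt_sub_one_of_pos hx hne
  rw [Real.log_inv] at this
  have h2 : 1 - (1 + Real.exp t)⁻¹ < Real.log (1 + Real.exp t) := by linarith
  have h3 : (1 + Real.exp t) * (1 - (1 + Real.exp t)⁻¹) = Real.exp t := by
    field_simp
    ring
  nlinarith [mul_lt_mul_of_pos_left h2 hE]

lemma d1Aux_neg (t : ℝ) : d1Aux t < 0 := by
  unfold d1Aux
  have := exp_lt_mul t
  have hpos := mul_pos (onePlusExp_pos t) (logOnePlusExp_pos t)
  rw [sub_neg, div_lt_one hpos]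
  exact this

lemma d2Aux_neg (t : ℝ) : d2Aux t < 0 := by
  unfold d2Aux
  exact div_neg_of_neg_of_pos
    (mul_neg_of_pos_of_neg (Real.exp_pos t) (by linarith [logA_lt_exp t]))
    (pow_pos (mul_pos (onePlusExp_pos t) (logOnePlusExp_pos t)) 2)

lemma chiAux_strictAnti : StrictAnti chiAux :=
  strictAnti_of_deriv_neg fun t => by
    rw [(hasDerivAt_chiAux t).deriv]; exact d1Aux_neg t

lemma chiAux_continuous : Continuous chiAux := by
  have h1 : Continuous fun t : ℝ => Real.log (1 + Real.exp t) :=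
    (continuous_const.add Real.continuous_exp).log fun t => (onePlusExp_pos t).ne'
  exact (h1.log fun t => (logOnePlusExp_pos t).ne').sub continuous_id

lemma chiAux_strictConcaveOn : StrictConcaveOn ℝ Set.univ chiAux := by
  apply strictConcaveOn_of_deriv2_neg convex_univ chiAux_continuous.continuousOn
  intro x _
  have hd : deriv chiAux = d1Aux := funext fun t => (hasDerivAt_chiAux t).deriv
  show deriv (deriv chiAux) x < 0
  rw [hd, (hasDerivAt_d1Aux x).deriv]
  exact d2Aux_neg x

/-- Strictly decreasing, concave function composed with strictly convex is strictly concave. -/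
lemma strictConcaveOn_comp_aux {s : Set ℝ} {f : ℝ → ℝ}
    (hf : StrictConvexOn ℝ s f) : StrictConcaveOn ℝ s (fun x => chiAux (f x)) := by
  refine ⟨hf.1, fun x hx y hy hxy a b ha hb hab => ?_⟩
  have h1 : f (a • x + b • y) < a • f x + b • f y := hf.2 hx hy hxy ha hb hab
  have h2 : chiAux (a • f x + b • f y) < chiAux (f (a • x + b • y)) := chiAux_strictAnti h1
  have h3 : a • chiAux (f x) + b • chiAux (f y) ≤ chiAux (a • f x + b • f y) :=
    chiAux_strictConcaveOn.concaveOn.2 (Set.mem_univ _) (Set.mem_univ _) ha.le hb.le hab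
  linarith

/-- Lemma 2: for real constants `N > 0` and `ζ > 0`, the throughput
`V(L) = ((N − L)/N) · log₂(1 + 2^L · N · ζ / (N − L))` is strictly log-concave on
`[0, N)`, i.e. `L ↦ ln V(L)` is strictly concave there. -/
theorem throughput_strictly_logConcave (N ζ : ℝ) (hN : 0 < N) (hζ : 0 < ζ) :
    StrictConcaveOn ℝ (Set.Ico (0 : ℝ) N)
      (fun L : ℝ =>
        Real.log (((N - L) / N) *
          Real.logb 2 (1 + (2 : ℝ) ^ L * N * ζ / (N - L)))) := by
  have hNζ : 0 < N * ζ := mul_pos hN hζ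
  set g : ℝ → ℝ := fun L => Real.log 2 * L + Real.log (N * ζ) - Real.log (N - L) with hgdef
  -- strict convexity of g
  have h1 : StrictConvexOn ℝ (Set.Ico (0:ℝ) N) (fun L => -Real.log (N - L)) := by
    refine ⟨convex_Ico _ _, fun x hx y hy hxy a b ha hb hab => ?_⟩
    have hx' : (0:ℝ) < N - x := sub_pos.2 hx.2
    have hy' : (0:ℝ) < N - y := sub_pos.2 hy.2
    have hne : N - x ≠ N - y := fun h => hxy (by linarith)
    have hlog := strictConcaveOn_log_Ioi.2 (Set.mem_Ioi.2 hx') (Set.mem_Ioi.2 hy') hne ha hb hab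
    simp only [smul_eq_mul] at hlog ⊢
    have heq : N - (a * x + b * y) = a * (N - x) + b * (N - y) := by
      have : a + b = 1 := hab; nlinarith
    rw [heq]
    linarith
  have h2 : ConvexOn ℝ (Set.Ico (0:ℝ) N) (fun L => Real.log 2 * L + Real.log (N * ζ)) := by
    refine ⟨convex_Ico _ _, fun x _ y _ a b ha hb hab => ?_⟩
    simp only [smul_eq_mul]
    exact le_of_eq (by linear_combination (-Real.log (N * ζ)) * hab)
  have hg : StrictConvexOn ℝ (Set.Ico (0:ℝ) N) g := by
    refine (h1.add_convexOn h2).congr fun x _ => ?_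
    simp only [Pi.add_apply, hgdef]
    ring
  have hcomp : StrictConcaveOn ℝ (Set.Ico (0:ℝ) N) (fun L => chiAux (g L)) :=
    strictConcaveOn_comp_aux hg
  have haff : ConcaveOn ℝ (Set.Ico (0:ℝ) N)
      (fun L => Real.log 2 * L + (Real.log ζ - Real.log (Real.log 2))) := by
    refine ⟨convex_Ico _ _, fun x _ y _ a b ha hb hab => ?_⟩
    simp only [smul_eq_mul]
    exact le_of_eq (by linear_combination (Real.log ζ - Real.log (Real.log 2)) * hab)
  refine (hcomp.add_concaveOn haff).congr fun L hL => ?_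
  obtain ⟨hL0, hLN⟩ := hL
  have hNL : (0:ℝ) < N - L := sub_pos.2 hLN
  have h2L : (0:ℝ) < (2:ℝ) ^ L := Real.rpow_pos_of_pos two_pos L
  set u : ℝ := (2:ℝ) ^ L * N * ζ / (N - L) with hudef
  have hupos : 0 < u := by positivity
  have hexp : Real.exp (g L) = u := by
    simp only [hgdef]
    rw [Real.exp_sub, Real.exp_add, Real.exp_log hNζ, Real.exp_log hNL,
      ← Real.rpow_def_of_pos two_pos, hudef]
    ring
  have h1u : (1:ℝ) < 1 + u := by linarith
  have hlog1u : (0:ℝ) < Real.log (1 + u) := Real.log_pos h1u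
  have hlog2 : (0:ℝ) < Real.log 2 := Real.log_pos one_lt_two
  show chiAux (g L) + (Real.log 2 * L + (Real.log ζ - Real.log (Real.log 2))) = _
  unfold chiAux
  rw [hexp]
  rw [Real.logb, Real.log_mul (by positivity : ((N - L)/N : ℝ) ≠ 0)
      (by positivity : (Real.log (1 + u) / Real.log 2 : ℝ) ≠ 0),
    Real.log_div hNL.ne' hN.ne', Real.log_div hlog1u.ne' hlog2.ne']
  simp only [hgdef]
  rw [Real.log_mul hN.ne' hζ.ne']
  ring
end

section
/- Let N ≥ 2 and K be integers with 2 ≤ K ≤ N − 1, and let γ₀ > 0, σ > 0. Set L̂ = (K + 1)/2. Then (1/K) · Σ_{j=0}^{K−1} ((N − j − 1)/N) · log₂(1 + N·K·γ₀ / ((N − j − 1)·σ)) < ((N − L̂)/N) · log₂(1 + N·(2L̂ − 1)·γ₀ / ((N − L̂)·σ)). -/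
open Finset Set Real

lemma aux_gauss (n : ℕ) : ∑ j ∈ Finset.range n, ((j:ℝ)) = n * ((n:ℝ) - 1) / 2 := by
  induction n with
  | zero => simp
  | succ m ih =>
    rw [Finset.sum_range_succ, ih]
    push_cast
    ring

lemma aux_hasDerivAt {a x : ℝ} (ha : 0 < a) (hx : 0 < x) :
    HasDerivAt (fun t : ℝ => t * Real.log (1 + a / t))
      (Real.log (1 + a / x) - a / (x + a)) x := by
  have hx0 : x ≠ 0 := ne_of_gt hx
  have h1 : 0 < 1 + a / x := by positivity
  have hd : HasDerivAt (fun t : ℝ => 1 + a / t) (a * -(x ^ 2)⁻¹) x := by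
    simpa [div_eq_mul_inv, mul_comm] using ((hasDerivAt_inv hx0).const_mul a).const_add 1
  have hlog := hd.log h1.ne'
  have : HasDerivAt (fun t : ℝ => t * Real.log (1 + a / t)) _ x := (hasDerivAt_id' x).mul hlog
  convert this using 1
  have hxa : x + a ≠ 0 := by positivity
  field_simp
  ring

lemma aux_deriv2_neg {a x : ℝ} (ha : 0 < a) (hx : 0 < x) :
    deriv (deriv (fun t : ℝ => t * Real.log (1 + a / t))) x < 0 := by
  have hderiv : ∀ y, 0 < y → deriv (fun t : ℝ => t * Real.log (1 + a / t)) y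
      = Real.log (1 + a / y) - a / (y + a) := fun y hy => (aux_hasDerivAt ha hy).deriv
  have heq : deriv (fun t : ℝ => t * Real.log (1 + a / t))
      =ᶠ[nhds x] fun y => Real.log (1 + a / y) - a / (y + a) := by
    filter_upwards [eventually_gt_nhds hx] with y hy using hderiv y hy
  rw [Filter.EventuallyEq.deriv_eq heq]
  have hx0 : x ≠ 0 := ne_of_gt hx
  have hxa : (0:ℝ) < x + a := by positivity
  have h1 : 0 < 1 + a / x := by positivity
  have hd : HasDerivAt (fun t : ℝ => 1 + a / t) (a * -(x ^ 2)⁻¹) x := by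
    simpa [div_eq_mul_inv, mul_comm] using ((hasDerivAt_inv hx0).const_mul a).const_add 1
  have hlog := hd.log h1.ne'
  have hfr : HasDerivAt (fun t : ℝ => a / (t + a))
      ((0 * (x + a) - a * 1) / (x + a) ^ 2) x :=
    (hasDerivAt_const x a).div ((hasDerivAt_id x).add_const a) hxa.ne'
  have htot : HasDerivAt (fun y => Real.log (1 + a / y) - a / (y + a)) _ x := hlog.sub hfr
  rw [htot.deriv]
  have hval : a * -(x ^ 2)⁻¹ / (1 + a / x) - (0 * (x + a) - a * 1) / (x + a) ^ 2
      = -(a ^ 2 / (x * (x + a) ^ 2)) := by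
    field_simp
    ring
  rw [hval]
  have : 0 < a ^ 2 / (x * (x + a) ^ 2) := by positivity
  linarith

lemma aux_strictConcave {a : ℝ} (ha : 0 < a) :
    StrictConcaveOn ℝ (Set.Ioi (0:ℝ)) (fun t : ℝ => t * Real.log (1 + a / t)) := by
  apply strictConcaveOn_of_deriv2_neg (convex_Ioi 0)
  · apply ContinuousOn.mul continuousOn_id
    apply ContinuousOn.log
    · exact continuousOn_const.add (continuousOn_const.div continuousOn_id
        fun x hx => ne_of_gt hx)
    · intro x hx
      have : (0:ℝ) < x := hx
      positivity
  · intro x hx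
    rw [interior_Ioi] at hx
    exact aux_deriv2_neg ha hx

lemma aux_const_mul {s : Set ℝ} {f : ℝ → ℝ} (h : StrictConcaveOn ℝ s f) {c : ℝ} (hc : 0 < c) :
    StrictConcaveOn ℝ s (fun x => c * f x) := by
  refine ⟨h.1, fun x hx y hy hxy p q hp hq hpq => ?_⟩
  have := h.2 hx hy hxy hp hq hpq
  simp only [smul_eq_mul] at this ⊢
  nlinarith

lemma aux_strictConcave_logb {a : ℝ} (ha : 0 < a) :
    StrictConcaveOn ℝ (Set.Ioi (0:ℝ)) (fun t : ℝ => t * Real.logb 2 (1 + a / t)) := by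
  have h2 : (0:ℝ) < (Real.log 2)⁻¹ := by
    have := Real.log_pos (by norm_num : (1:ℝ) < 2)
    positivity
  have := aux_const_mul (aux_strictConcave ha) h2
  convert this using 2 with t
  rw [Real.logb]
  ring

/-- Jensen step in the exhaustive-search analysis: for integers `2 ≤ K ≤ N − 1`
and `γ₀ > 0`, `σ > 0`, with `L̂ = (K+1)/2`,
`(1/K) Σ_{j=0}^{K−1} ((N−j−1)/N) log₂(1 + N K γ₀ / ((N−j−1)σ))
  < ((N−L̂)/N) log₂(1 + N (2L̂−1) γ₀ / ((N−L̂)σ))`. -/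
theorem exhaustive_jensen_bound (N K : ℕ) (hN : 2 ≤ N) (hK : 2 ≤ K) (hKN : K ≤ N - 1)
    (γ₀ σ : ℝ) (hγ : 0 < γ₀) (hσ : 0 < σ) :
    (1 / (K : ℝ)) *
        ∑ j ∈ range K,
          (((N : ℝ) - j - 1) / N) *
            Real.logb 2 (1 + (N : ℝ) * K * γ₀ / (((N : ℝ) - j - 1) * σ)) <
      (((N : ℝ) - ((K : ℝ) + 1) / 2) / N) *
        Real.logb 2
          (1 + (N : ℝ) * (2 * (((K : ℝ) + 1) / 2) - 1) * γ₀ /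
            (((N : ℝ) - ((K : ℝ) + 1) / 2) * σ)) := by
  have hKR : (0:ℝ) < K := by positivity
  have hNR : (0:ℝ) < N := by positivity
  have hKN' : (K : ℝ) ≤ (N : ℝ) - 1 := by
    have h1 : K + 1 ≤ N := by omega
    have : ((K:ℝ)) + 1 ≤ (N:ℝ) := by exact_mod_cast h1
    linarith
  set a : ℝ := K * γ₀ / σ with ha_def
  have ha : 0 < a := by positivity
  have hcc := aux_strictConcave_logb ha
  set g : ℝ → ℝ := fun t : ℝ => t * Real.logb 2 (1 + a / t) with hg
  set p : ℕ → ℝ := fun j => ((N : ℝ) - j - 1) / N with hp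
  have hden : ∀ j ∈ range K, (0:ℝ) < (N : ℝ) - j - 1 := by
    intro j hj
    simp only [Finset.mem_range] at hj
    have h1 : j + 1 ≤ N - 1 := by omega
    have h2 : j + 2 ≤ N := by omega
    have : ((j:ℝ)) + 2 ≤ (N:ℝ) := by exact_mod_cast h2
    linarith
  have hpos : ∀ j ∈ range K, p j ∈ Set.Ioi (0:ℝ) :=
    fun j hj => div_pos (hden j hj) hNR
  have hne : p 0 ≠ p 1 := by
    simp only [hp]
    intro h
    rw [div_eq_div_iff hNR.ne' hNR.ne'] at h
    push_cast at h
    nlinarith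
  have hjensen := hcc.lt_map_sum (t := range K) (w := fun _ => 1 / (K:ℝ)) (p := p)
    (fun i _ => by positivity)
    (by rw [Finset.sum_const, Finset.card_range, nsmul_eq_mul]; field_simp)
    hpos
    ⟨0, by simp; omega, 1, by simp; omega, hne⟩
  have hsum : ∑ j ∈ range K, (1 / (K:ℝ)) • p j = ((N:ℝ) - ((K:ℝ) + 1) / 2) / N := by
    simp only [hp, smul_eq_mul]
    rw [← Finset.mul_sum]
    have hgauss := aux_gauss K
    have hs : ∑ j ∈ range K, ((N:ℝ) - j - 1) / N
        = (K * N - K * ((K:ℝ)-1)/2 - K) / N := by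
      rw [← Finset.sum_div]
      congr 1
      rw [Finset.sum_sub_distrib, Finset.sum_sub_distrib, hgauss]
      simp [Finset.card_range]
    rw [hs]
    field_simp
    ring
  rw [hsum] at hjensen
  have htbar : (0:ℝ) < (N:ℝ) - ((K:ℝ) + 1) / 2 := by linarith
  have hLHS : (1 / (K : ℝ)) *
        ∑ j ∈ range K,
          (((N : ℝ) - j - 1) / N) *
            Real.logb 2 (1 + (N : ℝ) * K * γ₀ / (((N : ℝ) - j - 1) * σ))
      = ∑ j ∈ range K, (1 / (K:ℝ)) • g (p j) := by
    rw [Finset.mul_sum]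
    refine Finset.sum_congr rfl fun j hj => ?_
    have hdj := hden j hj
    simp only [smul_eq_mul, hg, hp]
    congr 2
    rw [ha_def]
    field_simp
  have hRHS : g (((N:ℝ) - ((K:ℝ) + 1) / 2) / N)
      = (((N : ℝ) - ((K : ℝ) + 1) / 2) / N) *
        Real.logb 2
          (1 + (N : ℝ) * (2 * (((K : ℝ) + 1) / 2) - 1) * γ₀ /
            (((N : ℝ) - ((K : ℝ) + 1) / 2) * σ)) := by
    simp only [hg]
    congr 2
    rw [ha_def]
    field_simp
    ring
  rw [hLHS, ← hRHS]
  exact hjensen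
end

section
/- Let N ≥ 2 and K be integers with 1 ≤ K ≤ N − 1, and let γ₀ > 0, σ > 0. Set L̂ = (K + 1)/2 and L = ⌊L̂⌋. Then the optimized bisection throughput strictly exceeds the average exhaustive-search throughput: ((N − L)/N) · log₂(1 + N·2^L·γ₀ / (σ·(N − L))) > (1/K) · Σ_{j=0}^{K−1} ((N − j − 1)/N) · log₂(1 + N·K·γ₀ / ((N − j − 1)·σ)). -/
noncomputable def bisF (c x : ℝ) : ℝ := x * (Real.log (x + c) - Real.log x)

lemma bisF_hasDerivAt {c : ℝ} (hc : 0 < c) {x : ℝ} (hx : 0 < x) :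
    HasDerivAt (bisF c) (Real.log (x + c) - Real.log x - c / (x + c)) x := by
  have hxc : 0 < x + c := by linarith
  have h1 : HasDerivAt (fun y : ℝ => Real.log (y + c)) (x + c)⁻¹ x := by
    exact ((Real.hasDerivAt_log hxc.ne').comp x ((hasDerivAt_id x).add_const c)).congr_deriv (mul_one _)
  have h2 : HasDerivAt (fun y : ℝ => Real.log (y + c) - Real.log y) ((x + c)⁻¹ - x⁻¹) x :=
    h1.sub (Real.hasDerivAt_log hx.ne')
  have h3 := (hasDerivAt_id x).mul h2
  refine h3.congr_deriv ?_
  simp only [id]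
  field_simp
  ring

lemma bisF'_hasDerivAt {c : ℝ} (hc : 0 < c) {x : ℝ} (hx : 0 < x) :
    HasDerivAt (fun y : ℝ => Real.log (y + c) - Real.log y - c / (y + c))
      (-(c ^ 2) / (x * (x + c) ^ 2)) x := by
  have hxc : 0 < x + c := by linarith
  have h1 : HasDerivAt (fun y : ℝ => Real.log (y + c)) (x + c)⁻¹ x := by
    exact ((Real.hasDerivAt_log hxc.ne').comp x ((hasDerivAt_id x).add_const c)).congr_deriv (mul_one _)
  have h4 : HasDerivAt (fun y : ℝ => y + c) 1 x := (hasDerivAt_id x).add_const c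
  have h5 : HasDerivAt (fun y : ℝ => c / (y + c)) ((0 * (x + c) - c * 1) / (x + c) ^ 2) x :=
    (hasDerivAt_const x c).div h4 hxc.ne'
  have h6 := ((h1.sub (Real.hasDerivAt_log hx.ne')).sub h5)
  refine h6.congr_deriv ?_
  field_simp
  ring

open Set Finset

lemma bisF_contOn {c : ℝ} (hc : 0 < c) : ContinuousOn (bisF c) (Ioi 0) :=
  fun x hx => ((bisF_hasDerivAt hc hx).continuousAt).continuousWithinAt

lemma bisF_concave {c : ℝ} (hc : 0 < c) : ConcaveOn ℝ (Ioi 0) (bisF c) := by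
  apply concaveOn_of_hasDerivWithinAt2_nonpos (convex_Ioi 0) (bisF_contOn hc)
      (f' := fun x => Real.log (x + c) - Real.log x - c / (x + c))
      (f'' := fun x => -(c ^ 2) / (x * (x + c) ^ 2))
  · intro x hx
    rw [interior_Ioi] at hx
    exact (bisF_hasDerivAt hc hx).hasDerivWithinAt
  · intro x hx
    rw [interior_Ioi] at hx
    exact (bisF'_hasDerivAt hc hx).hasDerivWithinAt
  · intro x hx
    rw [interior_Ioi] at hx
    have hx0 : (0:ℝ) < x := hx.out
    have hxc : (0:ℝ) < x + c := by linarith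
    have : -(c ^ 2) / (x * (x + c) ^ 2) = -(c ^ 2 / (x * (x + c) ^ 2)) := by ring
    rw [this, neg_nonpos]
    positivity

lemma bisF_deriv_pos {c : ℝ} (hc : 0 < c) {x : ℝ} (hx : 0 < x) :
    0 < Real.log (x + c) - Real.log x - c / (x + c) := by
  have hxc : 0 < x + c := by linarith
  have ht : (0:ℝ) < x / (x + c) := by positivity
  have hne : x / (x + c) ≠ 1 := by
    intro h
    rw [div_eq_one_iff_eq hxc.ne'] at h
    linarith
  have h := Real.log_lt_sub_one_of_pos ht hne
  rw [Real.log_div hx.ne' hxc.ne'] at h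
  have : x / (x + c) - 1 = -(c / (x + c)) := by field_simp; ring
  rw [this] at h
  linarith

lemma bisF_strictMono {c : ℝ} (hc : 0 < c) : StrictMonoOn (bisF c) (Ioi 0) := by
  apply strictMonoOn_of_deriv_pos (convex_Ioi 0) (bisF_contOn hc)
  intro x hx
  rw [interior_Ioi] at hx
  rw [(bisF_hasDerivAt hc hx).deriv]
  exact bisF_deriv_pos hc hx

lemma bisF_mono_c {c c' x : ℝ} (hc : 0 < c) (hcc : c ≤ c') (hx : 0 < x) :
    bisF c x ≤ bisF c' x := by
  unfold bisF
  have : Real.log (x + c) ≤ Real.log (x + c') :=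
    Real.log_le_log (by linarith) (by linarith)
  nlinarith

lemma bisF_strict_c {c c' x : ℝ} (hc : 0 < c) (hcc : c < c') (hx : 0 < x) :
    bisF c x < bisF c' x := by
  unfold bisF
  have : Real.log (x + c) < Real.log (x + c') :=
    Real.log_lt_log (by linarith) (by linarith)
  nlinarith

lemma bis_sum_range_id (K : ℕ) : ∑ j ∈ range K, (j : ℝ) = K * ((K : ℝ) - 1) / 2 := by
  induction K with
  | zero => simp
  | succ n ih =>
    rw [Finset.sum_range_succ, ih]
    push_cast; ring

lemma bis_two_mul_le_two_pow {m : ℕ} (hm : 1 ≤ m) : 2 * m ≤ 2 ^ m := by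
  induction m with
  | zero => omega
  | succ n ih =>
    rcases Nat.eq_or_lt_of_le hm with h | h
    · simp [← h]
    · have hn : 1 ≤ n := by omega
      have h1 := ih hn
      have h2n : 2 ≤ 2 ^ n := by
        calc 2 = 2 ^ 1 := rfl
        _ ≤ 2 ^ n := Nat.pow_le_pow_right (by norm_num) hn
      have : 2 ^ (n + 1) = 2 ^ n + 2 ^ n := by rw [pow_succ]; ring
      omega

lemma bisF_logb_term {c x Nr : ℝ} (hc : 0 < c) (hx : 0 < x) (hN : 0 < Nr) :
    (x / Nr) * Real.logb 2 (1 + c / x) = bisF c x / (Nr * Real.log 2) := by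
  rw [Real.logb, bisF]
  have h1 : 1 + c / x = (x + c) / x := by field_simp
  rw [h1, Real.log_div (by positivity) hx.ne']
  ring

/-- Lemma 3: bisection strictly outperforms exhaustive search. For integers
`1 ≤ K ≤ N − 1`, `γ₀ > 0`, `σ > 0`, with `L̂ = (K+1)/2` and `L = ⌊L̂⌋`,
`((N−L)/N) log₂(1 + N 2^L γ₀ / (σ(N−L)))
  > (1/K) Σ_{j=0}^{K−1} ((N−j−1)/N) log₂(1 + N K γ₀ / ((N−j−1)σ))`. -/
theorem bisection_beats_exhaustive (N K : ℕ) (hN : 2 ≤ N) (hK : 1 ≤ K) (hKN : K ≤ N - 1)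
    (γ₀ σ : ℝ) (hγ : 0 < γ₀) (hσ : 0 < σ) :
    (1 / (K : ℝ)) *
        ∑ j ∈ range K,
          (((N : ℝ) - j - 1) / N) *
            Real.logb 2 (1 + (N : ℝ) * K * γ₀ / (((N : ℝ) - j - 1) * σ)) <
      (((N : ℝ) - (⌊((K : ℝ) + 1) / 2⌋ : ℤ)) / N) *
        Real.logb 2
          (1 + (N : ℝ) * (2 : ℝ) ^ (⌊((K : ℝ) + 1) / 2⌋ : ℤ) * γ₀ /
            (σ * ((N : ℝ) - (⌊((K : ℝ) + 1) / 2⌋ : ℤ)))) := by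
  have hKN' : K + 1 ≤ N := by omega
  have hNpos : (0 : ℝ) < N := by positivity
  have hKpos : (0 : ℝ) < K := by exact_mod_cast hK
  have hKNr : (K : ℝ) + 1 ≤ N := by exact_mod_cast hKN'
  set Lz : ℤ := ⌊((K : ℝ) + 1) / 2⌋ with hLzdef
  set c : ℝ := (N : ℝ) * K * γ₀ / σ with hcdef
  set c' : ℝ := (N : ℝ) * (2 : ℝ) ^ Lz * γ₀ / σ with hc'def
  have hLz0 : (0 : ℤ) ≤ Lz := by
    apply Int.le_floor.mpr
    push_cast
    linarith
  have hc'pos : 0 < c' := by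
    have : (0:ℝ) < (2:ℝ) ^ Lz := zpow_pos (by norm_num) Lz
    rw [hc'def]; positivity
  have hcpos : 0 < c := by rw [hcdef]; positivity
  have hLzK : (Lz : ℝ) ≤ ((K : ℝ) + 1) / 2 := Int.floor_le _
  have hK1r : (1 : ℝ) ≤ K := by exact_mod_cast hK
  have hxLpos : (0 : ℝ) < (N : ℝ) - Lz := by
    have : ((K : ℝ) + 1) / 2 ≤ K := by linarith
    linarith
  have hlog2 : (0 : ℝ) < Real.log 2 := Real.log_pos one_lt_two
  -- positivity of each summand point
  have hxj : ∀ j ∈ range K, (0 : ℝ) < (N : ℝ) - j - 1 := by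
    intro j hj
    rw [Finset.mem_range] at hj
    have : (j : ℝ) + 1 ≤ K := by exact_mod_cast hj
    linarith
  -- Jensen step
  have jensen : (1 / (K : ℝ)) * ∑ j ∈ range K, bisF c ((N : ℝ) - j - 1)
      ≤ bisF c ((N : ℝ) - ((K : ℝ) + 1) / 2) := by
    have h₀ : ∀ j ∈ range K, (0 : ℝ) ≤ (K : ℝ)⁻¹ := fun _ _ => by positivity
    have h₁ : ∑ _j ∈ range K, (K : ℝ)⁻¹ = 1 := by
      rw [Finset.sum_const, card_range, nsmul_eq_mul, mul_inv_cancel₀ hKpos.ne']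
    have hmem : ∀ j ∈ range K, ((N : ℝ) - j - 1) ∈ Ioi (0 : ℝ) := fun j hj => hxj j hj
    have hj := (bisF_concave hcpos).le_map_sum h₀ h₁ hmem
    simp only [smul_eq_mul] at hj
    have hsumid := bis_sum_range_id K
    have hsum2 : ∑ j ∈ range K, (K : ℝ)⁻¹ * ((N : ℝ) - j - 1)
        = (N : ℝ) - ((K : ℝ) + 1) / 2 := by
      rw [← Finset.mul_sum]
      have : ∑ j ∈ range K, ((N : ℝ) - j - 1)
          = K * ((N : ℝ) - 1) - K * ((K : ℝ) - 1) / 2 := by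
        rw [Finset.sum_sub_distrib, Finset.sum_sub_distrib, hsumid]
        simp [Finset.sum_const, card_range]
        ring
      rw [this]
      field_simp
      ring
    rw [hsum2] at hj
    rw [one_div, Finset.mul_sum]
    exact hj
  -- key inequality
  have key : (1 / (K : ℝ)) * ∑ j ∈ range K, bisF c ((N : ℝ) - j - 1)
      < bisF c' ((N : ℝ) - Lz) := by
    rcases Nat.even_or_odd K with ⟨m, hm⟩ | ⟨m, hm⟩
    · -- K = 2m, Lz = m
      have hm1 : 1 ≤ m := by omega
      have hLzm : Lz = (m : ℤ) := by
        rw [hLzdef]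
        apply Int.floor_eq_iff.mpr
        constructor
        · push_cast [hm]; linarith
        · push_cast [hm]; linarith
      have hmN : (m : ℝ) + 1 ≤ N := by
        have : m + 1 ≤ N := by omega
        exact_mod_cast this
      have hcc' : c ≤ c' := by
        have h2m : (K : ℝ) ≤ (2 : ℝ) ^ Lz := by
          rw [hLzm, zpow_natCast]
          have hKle : K ≤ 2 ^ m := le_trans (by omega) (bis_two_mul_le_two_pow hm1)
          calc (K : ℝ) ≤ ((2 ^ m : ℕ) : ℝ) := by exact_mod_cast hKle
            _ = (2 : ℝ) ^ m := by push_cast; ring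
        rw [hcdef, hc'def]
        gcongr
      calc (1 / (K : ℝ)) * ∑ j ∈ range K, bisF c ((N : ℝ) - j - 1)
          ≤ bisF c ((N : ℝ) - ((K : ℝ) + 1) / 2) := jensen
        _ < bisF c ((N : ℝ) - Lz) := by
            apply bisF_strictMono hcpos
            · rw [Set.mem_Ioi, hm]; push_cast; linarith
            · exact hxLpos
            · rw [hLzm, hm]; push_cast; linarith
        _ ≤ bisF c' ((N : ℝ) - Lz) := bisF_mono_c hcpos hcc' hxLpos
    · -- K = 2m+1, Lz = m+1
      have hLzm : Lz = (m : ℤ) + 1 := by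
        rw [hLzdef]
        have : ((K : ℝ) + 1) / 2 = ((m : ℤ) + 1 : ℤ) := by push_cast [hm]; ring
        rw [this, Int.floor_intCast]
      have hcc' : c < c' := by
        have h2m : (K : ℝ) < (2 : ℝ) ^ Lz := by
          have hz : Lz = ((m + 1 : ℕ) : ℤ) := by rw [hLzm]; push_cast; ring
          rw [hz, zpow_natCast]
          have hlt : K < 2 ^ (m + 1) := by
            have h1 : m < 2 ^ m := Nat.lt_two_pow_self
            have : 2 * m + 1 < 2 ^ (m + 1) := by
              rw [pow_succ]; omega
            omega
          calc (K : ℝ) < ((2 ^ (m + 1) : ℕ) : ℝ) := by exact_mod_cast hlt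
            _ = (2 : ℝ) ^ (m + 1) := by push_cast; ring
        rw [hcdef, hc'def]
        gcongr
      have hKhalf : ((K : ℝ) + 1) / 2 = (Lz : ℝ) := by
        rw [hLzm]; push_cast [hm]; ring
      calc (1 / (K : ℝ)) * ∑ j ∈ range K, bisF c ((N : ℝ) - j - 1)
          ≤ bisF c ((N : ℝ) - ((K : ℝ) + 1) / 2) := jensen
        _ = bisF c ((N : ℝ) - Lz) := by rw [hKhalf]
        _ < bisF c' ((N : ℝ) - Lz) := bisF_strict_c hcpos hcc' hxLpos
  -- rewrite goal in terms of bisF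
  calc (1 / (K : ℝ)) * ∑ j ∈ range K,
        (((N : ℝ) - j - 1) / N) *
          Real.logb 2 (1 + (N : ℝ) * K * γ₀ / (((N : ℝ) - j - 1) * σ))
      = ((1 / (K : ℝ)) * ∑ j ∈ range K, bisF c ((N : ℝ) - j - 1)) / ((N : ℝ) * Real.log 2) := by
        have hterm : ∀ j ∈ range K,
            (((N : ℝ) - j - 1) / N) *
              Real.logb 2 (1 + (N : ℝ) * K * γ₀ / (((N : ℝ) - j - 1) * σ))
            = bisF c ((N : ℝ) - j - 1) / ((N : ℝ) * Real.log 2) := by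
          intro j hj
          have hx := hxj j hj
          have harg : (N : ℝ) * K * γ₀ / (((N : ℝ) - j - 1) * σ) = c / ((N : ℝ) - j - 1) := by
            rw [hcdef]
            field_simp
          rw [harg, bisF_logb_term hcpos hx hNpos]
        rw [Finset.sum_congr rfl hterm, ← Finset.sum_div, mul_div_assoc]
    _ < bisF c' ((N : ℝ) - Lz) / ((N : ℝ) * Real.log 2) := by
        exact (div_lt_div_iff_of_pos_right (by positivity)).mpr key
    _ = (((N : ℝ) - Lz) / N) *
        Real.logb 2 (1 + (N : ℝ) * (2 : ℝ) ^ Lz * γ₀ / (σ * ((N : ℝ) - Lz))) := by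
        have harg : (N : ℝ) * (2 : ℝ) ^ Lz * γ₀ / (σ * ((N : ℝ) - Lz)) = c' / ((N : ℝ) - Lz) := by
          rw [hc'def]
          field_simp
        rw [harg, bisF_logb_term hc'pos hxLpos hNpos]
end
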